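/- Fix a finite nonempty alphabet Σ equipped with a linear order, and let Ξ := Σ ⊕ Σ'' ⊕ Sym with φ : FL_Σ → Ξ* the canonical encoding. Define the acceptances relation acc_Σ ⊆ FL_Σ × (Σ* × (Finset Σ ∪ {•})), relating the observation ⟨A₀,a₁,…,aₙ,Aₙ⟩ to the single pair (a₁…aₙ, Aₙ). Let Θ := Σ ⊕ Σ'' ⊕ Sym and define ψ by: ψ(s, •) = s, and ψ(s, A) = s followed by the symbol ⟨, the double-primed copies of the elements of A in increasing order, and the symbol ⟩. Then: (a) there exists a nondeterministic finite automaton with finitely many states over the alphabet Ξ ⊕ Θ recognising the relation {(φ(x), ψ(y)) : (x, y) ∈ acc_Σ}; and (b) ψ is order-reflecting, i.e. whenever ψ(y₁) is a prefix of ψ(y₂) then y₁ ≼ y₂, where ≼ is the relation induced by acc_Σ from the extension order on FL_Σ. -/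

import Mathlib

/-- A finite linear observation over alphabet `α`: an initial annotation `A₀`
(`none` = `•`, `some A` = a stable acceptance set) together with a list of pairs
`(aᵢ, Aᵢ)` of an event and the following annotation. -/
abbrev FLObs (α : Type) := Option (Finset α) × List (α × Option (Finset α))

/-- Extension on annotations: either they are equal or the first is `•`. -/
def optExt {α : Type} (A B : Option (Finset α)) : Prop := A = B ∨ A = none

/-- The extension order on finite linear observations. -/
def extLE {α : Type} (u v : FLObs α) : Prop :=
  optExt u.1 v.1 ∧ u.2.length ≤ v.2.length ∧
    ∀ (i : ℕ) (hi : i < u.2.length) (hj : i < v.2.length),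
      (u.2.get ⟨i, hi⟩).1 = (v.2.get ⟨i, hj⟩).1 ∧
        optExt (u.2.get ⟨i, hi⟩).2 (v.2.get ⟨i, hj⟩).2

/-- The four symbols `⟨`, `⟩`, `,`, `•` used by the canonical encoding. -/
inductive MSym : Type
  | lang | rang | comma | bullet
deriving DecidableEq

instance instFintypeMSym : Fintype MSym :=
  ⟨{MSym.lang, MSym.rang, MSym.comma, MSym.bullet}, fun x => by cases x <;> simp⟩

/-- The alphabet `Ξ = Σ ⊕ Σ'' ⊕ MSym` of the canonical encoding: `Sum.inl a` is the
event `a`, `Sum.inr (Sum.inl a)` is the double-primed copy `a''`, and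
`Sum.inr (Sum.inr s)` is a symbol. -/
abbrev Xi (α : Type) := α ⊕ α ⊕ MSym

/-- Encoding of an annotation: `•` is the symbol `•`, a set is the list of the
double-primed copies of its elements in increasing order. -/
def encAnnXi {α : Type} [LinearOrder α] : Option (Finset α) → List (Xi α)
  | none => [Sum.inr (Sum.inr MSym.bullet)]
  | some A => (A.sort (· ≤ ·)).map (fun a => Sum.inr (Sum.inl a))

/-- The canonical encoding `φ` of finite linear observations: the observation
`⟨A₀, a₁, A₁, …, aₙ, Aₙ⟩` is written as the string `⟨ A₀ , a₁ , A₁ , … , aₙ , Aₙ ⟩`. -/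
def phi {α : Type} [LinearOrder α] (u : FLObs α) : List (Xi α) :=
  [Sum.inr (Sum.inr MSym.lang)] ++ encAnnXi u.1 ++
    (u.2.map (fun p => [Sum.inr (Sum.inr MSym.comma), Sum.inl p.1,
      Sum.inr (Sum.inr MSym.comma)] ++ encAnnXi p.2)).flatten ++
    [Sum.inr (Sum.inr MSym.rang)]

/-- An NFA over `α ⊕ β` recognises a relation `R ⊆ α* × β*` if `R s t` holds exactly
when the NFA accepts some interleaving of `s` (as left letters) and `t` (as right
letters). -/
def Recognises {α β Q : Type} (A : NFA (α ⊕ β) Q) (R : List α → List β → Prop) : Prop :=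
  ∀ (s : List α) (t : List β),
    R s t ↔ ∃ w ∈ A.accepts, w.filterMap Sum.getLeft? = s ∧ w.filterMap Sum.getRight? = t

/-- The relation on `O` induced by a relation `M : S → O → Prop` from a preorder
`le` on `S`. -/
def inducedRel {S O : Type} (le : S → S → Prop) (M : S → O → Prop) (y₁ y₂ : O) : Prop :=
  ∀ b, M b y₂ → ∃ a, M a y₁ ∧ le a b

/-- The final annotation `Aₙ` of an observation. -/
def lastAnn {α : Type} (u : FLObs α) : Option (Finset α) :=
  match u.2.getLast? with
  | none => u.1
  | some p => p.2


/-- The acceptances relation: it relates `⟨A₀,a₁,…,aₙ,Aₙ⟩` to the single pair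
`(a₁…aₙ, Aₙ)`. -/
def accRel {α : Type} (u : FLObs α) (y : List α × Option (Finset α)) : Prop :=
  y.1 = u.2.map Prod.fst ∧ y.2 = lastAnn u

/-- The output alphabet `Θ = Σ ⊕ Σ'' ⊕ Sym` for acceptances: `Sum.inl a` is the event
`a`, `Sum.inr (Sum.inl a)` is the double-primed copy `a''`, `Sum.inr (Sum.inr s)` a
symbol. -/
abbrev ThetaA (α : Type) := α ⊕ α ⊕ MSym

/-- The output encoding for acceptances: `ψ (s, •) = s` and `ψ (s, A) = s ⟨ A'' ⟩`
with the elements of `A` double-primed, in increasing order. -/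
def psiA {α : Type} [LinearOrder α] (y : List α × Option (Finset α)) : List (ThetaA α) :=
  y.1.map Sum.inl ++
    (match y.2 with
     | none => []
     | some A => [Sum.inr (Sum.inr MSym.lang)] ++
         (A.sort (· ≤ ·)).map (fun a => Sum.inr (Sum.inl a)) ++ [Sum.inr (Sum.inr MSym.rang)])

namespace CanonA

set_option linter.unusedSectionVars false

variable {α : Type} [LinearOrder α]

abbrev Ltr (α : Type) := Xi α ⊕ ThetaA α

/-- non-last annotation segment -/
def segNL (A : Option (Finset α)) : List (Ltr α) :=
  match A with
  | none => [.inl (.inr (.inr .bullet))]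
  | some B => (B.sort (· ≤ ·)).map (fun b => .inl (.inr (.inl b)))

/-- last annotation segment -/
def segL (A : Option (Finset α)) : List (Ltr α) :=
  match A with
  | none => [.inl (.inr (.inr .bullet))]
  | some B => .inr (.inr (.inr .lang)) ::
      ((B.sort (· ≤ ·)).flatMap (fun b => [.inl (.inr (.inl b)), .inr (.inr (.inl b))]) ++
        [.inr (.inr (.inr .rang))])

def body : Option (Finset α) → List (α × Option (Finset α)) → List (Ltr α)
  | A, [] => segL A ++ [.inl (.inr (.inr .rang))]
  | A, (a, A') :: l => segNL A ++ (.inl (.inr (.inr .comma)) :: .inl (.inl a) ::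
      .inr (.inl a) :: .inl (.inr (.inr .comma)) :: body A' l)

def canon (x : FLObs α) : List (Ltr α) := .inl (.inr (.inr .lang)) :: body x.1 x.2


theorem fm_left_prime (l : List α) :
    List.filterMap Sum.getLeft? (l.map (fun b => (Sum.inl (Sum.inr (Sum.inl b)) : Ltr α))) =
      l.map (fun a => (Sum.inr (Sum.inl a) : Xi α)) := by
  induction l <;> simp_all [Sum.getLeft?]

theorem fm_pair_left (l : List α) :
    List.filterMap Sum.getLeft?
      (l.flatMap (fun b => [(.inl (.inr (.inl b)) : Ltr α), .inr (.inr (.inl b))])) =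
      l.map (fun a => (Sum.inr (Sum.inl a) : Xi α)) := by
  induction l <;> simp_all [Sum.getLeft?, List.filterMap_cons]

theorem fm_pair_right (l : List α) :
    List.filterMap Sum.getRight?
      (l.flatMap (fun b => [(.inl (.inr (.inl b)) : Ltr α), .inr (.inr (.inl b))])) =
      l.map (fun a => (Sum.inr (Sum.inl a) : ThetaA α)) := by
  induction l <;> simp_all [Sum.getRight?, List.filterMap_cons]

theorem segNL_left (A : Option (Finset α)) :
    (segNL A).filterMap Sum.getLeft? = encAnnXi A := by
  cases A with
  | none => simp [segNL, encAnnXi, Sum.getLeft?]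
  | some B => simp only [segNL, encAnnXi]; exact fm_left_prime _

theorem segNL_right (A : Option (Finset α)) :
    (segNL A).filterMap Sum.getRight? = ([] : List (ThetaA α)) := by
  cases A <;> simp [segNL, List.filterMap_map, Function.comp]

theorem segL_left (A : Option (Finset α)) :
    (segL A).filterMap Sum.getLeft? = encAnnXi A := by
  cases A <;> simp [segL, encAnnXi, fm_pair_left, List.filterMap_cons]

theorem segL_right (A : Option (Finset α)) :
    (segL A).filterMap Sum.getRight? =
      (match A with
       | none => ([] : List (ThetaA α))
       | some B => [Sum.inr (Sum.inr MSym.lang)] ++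
           (B.sort (· ≤ ·)).map (fun a => Sum.inr (Sum.inl a)) ++ [Sum.inr (Sum.inr MSym.rang)]) := by
  cases A <;> simp [segL, fm_pair_right]

theorem body_left (A : Option (Finset α)) (l : List (α × Option (Finset α))) :
    (body A l).filterMap Sum.getLeft? =
      encAnnXi A ++ (l.map (fun p => [Sum.inr (Sum.inr MSym.comma), Sum.inl p.1,
        Sum.inr (Sum.inr MSym.comma)] ++ encAnnXi p.2)).flatten ++
      [Sum.inr (Sum.inr MSym.rang)] := by
  induction l generalizing A with
  | nil => simp [body, segL_left]
  | cons p l ih =>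
    obtain ⟨a, A'⟩ := p
    simp [body, segNL_left, ih, List.filterMap_cons]

theorem canon_left (x : FLObs α) : (canon x).filterMap Sum.getLeft? = phi x := by
  simp [canon, phi, body_left]

theorem body_right (A : Option (Finset α)) (l : List (α × Option (Finset α))) :
    (body A l).filterMap Sum.getRight? = psiA (l.map Prod.fst, lastAnn (A, l)) := by
  induction l generalizing A with
  | nil => simp [body, segL_right, psiA, lastAnn]
  | cons p l ih =>
    obtain ⟨a, A'⟩ := p
    have hl : lastAnn (A, (a, A') :: l) = lastAnn (A', l) := by
      cases l with
      | nil => simp [lastAnn]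
      | cons q m =>
        unfold lastAnn
        simp only [List.getLast?_cons_cons]
        cases h : (q :: m).getLast? with
        | none => simp [List.getLast?_eq_none_iff] at h
        | some p => simp [h]
    simp [body, segNL_right, ih, psiA, hl, List.filterMap_cons]

theorem canon_right (x : FLObs α) :
    (canon x).filterMap Sum.getRight? = psiA (x.2.map Prod.fst, lastAnn x) := by
  obtain ⟨A, l⟩ := x
  simp [canon, body_right, List.filterMap_cons]

/-! ### The DFA -/

inductive St (α : Type) : Type
  | init | annStart | afterBullet | expectEvent | afterEcho | lastSetStart
  | expectRang | stDone | stDead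
  | midNL (b : α) | gotEvent (a : α) | lastHalf (b : α) | lastMid (b : α)
deriving DecidableEq, Fintype

def stepF : St α → Ltr α → St α
  | .stDead, _ => .stDead
  | .stDone, _ => .stDead
  | .init, .inl (.inr (.inr .lang)) => .annStart
  | .annStart, .inl (.inr (.inr .bullet)) => .afterBullet
  | .annStart, .inl (.inr (.inl b)) => .midNL b
  | .annStart, .inr (.inr (.inr .lang)) => .lastSetStart
  | .annStart, .inl (.inr (.inr .comma)) => .expectEvent
  | .afterBullet, .inl (.inr (.inr .comma)) => .expectEvent
  | .afterBullet, .inl (.inr (.inr .rang)) => .stDone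
  | .midNL b, .inl (.inr (.inl c)) => if b < c then .midNL c else .stDead
  | .midNL _, .inl (.inr (.inr .comma)) => .expectEvent
  | .lastSetStart, .inl (.inr (.inl b)) => .lastHalf b
  | .lastSetStart, .inr (.inr (.inr .rang)) => .expectRang
  | .lastHalf b, .inr (.inr (.inl c)) => if c = b then .lastMid b else .stDead
  | .lastMid b, .inl (.inr (.inl c)) => if b < c then .lastHalf c else .stDead
  | .lastMid _, .inr (.inr (.inr .rang)) => .expectRang
  | .expectRang, .inl (.inr (.inr .rang)) => .stDone
  | .expectEvent, .inl (.inl a) => .gotEvent a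
  | .gotEvent a, .inr (.inl c) => if c = a then .afterEcho else .stDead
  | .afterEcho, .inl (.inr (.inr .comma)) => .annStart
  | _, _ => .stDead

def run (q : St α) (w : List (Ltr α)) : St α := w.foldl stepF q

@[simp] theorem run_nil (q : St α) : run q [] = q := rfl
@[simp] theorem run_cons (q : St α) (c : Ltr α) (w : List (Ltr α)) :
    run q (c :: w) = run (stepF q c) w := rfl
theorem run_append (q : St α) (u v : List (Ltr α)) :
    run q (u ++ v) = run (run q u) v := List.foldl_append ..

@[simp] theorem stepF_dead (c : Ltr α) : stepF .stDead c = .stDead := rfl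
@[simp] theorem stepF_done (c : Ltr α) : stepF .stDone c = .stDead := rfl

@[simp] theorem run_dead (w : List (Ltr α)) : run .stDead w = .stDead := by
  induction w <;> simp_all

theorem run_done (w : List (Ltr α)) (h : run .stDone w = .stDone) : w = [] := by
  cases w with
  | nil => rfl
  | cons c w => simp at h

/-! Forward direction -/

theorem runF_mid (m : List α) (b : α) (hm : List.Chain (· < ·) b m) (w : List (Ltr α)) :
    run (.midNL b) ((m.map (fun c => (.inl (.inr (.inl c)) : Ltr α))) ++
      (.inl (.inr (.inr .comma)) :: w)) = run .expectEvent w := by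
  induction m generalizing b with
  | nil => simp [stepF]
  | cons c m ih =>
    obtain ⟨hbc, hm⟩ := List.chain_cons.mp hm
    simp only [List.map_cons, List.cons_append, run_cons]
    rw [show stepF (.midNL b) (.inl (.inr (.inl c))) = (.midNL c : St α) by simp [stepF, hbc]]
    exact ih c hm

theorem runF_segNL (A : Option (Finset α)) (w : List (Ltr α)) :
    run .annStart (segNL A ++ (.inl (.inr (.inr .comma)) :: w)) = run .expectEvent w := by
  cases A with
  | none => simp [segNL, stepF]
  | some B =>
    simp only [segNL]
    rcases hs : B.sort (· ≤ ·) with _ | ⟨b, m⟩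
    · simp [stepF]
    · have hsort : List.Chain (· < ·) b m := by
        have := List.sortedLT_iff_pairwise.mp B.sortedLT_sort
        rw [hs] at this
        exact List.isChain_iff_pairwise.mpr this
      simp only [List.map_cons, List.cons_append, run_cons]
      rw [show stepF (.annStart) (.inl (.inr (.inl b))) = (.midNL b : St α) from rfl]
      exact runF_mid m b hsort w

theorem runF_lastMid (m : List α) (b : α) (hm : List.Chain (· < ·) b m) :
    run (.lastMid b) ((m.flatMap (fun c => [(.inl (.inr (.inl c)) : Ltr α),
        .inr (.inr (.inl c))])) ++ [.inr (.inr (.inr .rang)), .inl (.inr (.inr .rang))]) =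
      .stDone := by
  induction m generalizing b with
  | nil => simp [stepF]
  | cons c m ih =>
    obtain ⟨hbc, hm⟩ := List.chain_cons.mp hm
    simp only [List.flatMap_cons, List.cons_append, List.append_assoc, run_cons]
    rw [show stepF (.lastMid b) (.inl (.inr (.inl c))) = (.lastHalf c : St α) by
      simp [stepF, hbc]]
    rw [show stepF (.lastHalf c) (.inr (.inr (.inl c))) = (.lastMid c : St α) by simp [stepF]]
    simpa using ih c hm

theorem runF_segL (A : Option (Finset α)) :
    run .annStart (segL A ++ [.inl (.inr (.inr .rang))]) = .stDone := by
  cases A with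
  | none => simp [segL, stepF]
  | some B =>
    simp only [segL]
    rcases hs : B.sort (· ≤ ·) with _ | ⟨b, m⟩
    · simp [stepF]
    · have hsort : List.Chain (· < ·) b m := by
        have := List.sortedLT_iff_pairwise.mp B.sortedLT_sort
        rw [hs] at this
        exact List.isChain_iff_pairwise.mpr this
      simp only [List.cons_append, run_cons, List.flatMap_cons, List.append_assoc]
      rw [show stepF (.annStart) (.inr (.inr (.inr .lang))) = (.lastSetStart : St α) from rfl,
        show stepF (.lastSetStart) (.inl (.inr (.inl b))) = (.lastHalf b : St α) from rfl,
        show stepF (.lastHalf b) (.inr (.inr (.inl b))) = (.lastMid b : St α) by simp [stepF]]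
      simpa using runF_lastMid m b hsort

theorem runF_body (l : List (α × Option (Finset α))) (A : Option (Finset α)) :
    run .annStart (body A l) = .stDone := by
  induction l generalizing A with
  | nil => simpa [body] using runF_segL A
  | cons p l ih =>
    obtain ⟨a, A'⟩ := p
    rw [body, runF_segNL]
    simp only [run_cons]
    rw [show stepF (.expectEvent) (.inl (.inl a)) = (.gotEvent a : St α) from rfl,
      show stepF (.gotEvent a) (.inr (.inl a)) = (.afterEcho : St α) by simp [stepF],
      show stepF (.afterEcho) (.inl (.inr (.inr .comma))) = (.annStart : St α) from rfl]
    exact ih A'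

theorem runF_canon (x : FLObs α) : run .init (canon x) = .stDone := by
  simpa [canon, stepF] using runF_body x.2 x.1

/-! Backward direction -/

theorem runB_expectRang (w : List (Ltr α)) (h : run .expectRang w = .stDone) :
    w = [.inl (.inr (.inr .rang))] := by
  cases w with
  | nil => simp at h
  | cons c w =>
    rcases c with (a | c' | (_|_|_|_)) | (a | c' | (_|_|_|_)) <;> simp [stepF] at h
    rw [run_done w h]

theorem runB_expectEvent (w : List (Ltr α)) (h : run .expectEvent w = .stDone) :
    ∃ a w', w = .inl (.inl a) :: .inr (.inl a) :: .inl (.inr (.inr .comma)) :: w' ∧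
      run .annStart w' = .stDone := by
  cases w with
  | nil => simp at h
  | cons c w =>
    rcases c with (a | c' | (_|_|_|_)) | (a | c' | (_|_|_|_)) <;> simp [stepF] at h
    cases w with
    | nil => simp at h
    | cons d w =>
      rcases d with (a' | c' | (_|_|_|_)) | (a' | c' | (_|_|_|_)) <;> simp [stepF] at h
      by_cases hc : a' = a
      · subst hc
        simp at h
        cases w with
        | nil => simp at h
        | cons e w =>
          rcases e with (a'' | c' | (_|_|_|_)) | (a'' | c' | (_|_|_|_)) <;> simp [stepF] at h
          exact ⟨a', w, rfl, h⟩
      · rw [if_neg hc] at h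
        simp at h

theorem runB_mid (w : List (Ltr α)) : ∀ (b : α), run (.midNL b) w = .stDone →
    ∃ m w', List.Chain (· < ·) b m ∧
      w = m.map (fun c => (.inl (.inr (.inl c)) : Ltr α)) ++
        (.inl (.inr (.inr .comma)) :: w') ∧ run .expectEvent w' = .stDone := by
  induction w with
  | nil => intro b h; simp at h
  | cons c w ih =>
    intro b h
    rcases c with (a | c' | (_|_|_|_)) | (a | c' | (_|_|_|_)) <;> simp [stepF] at h
    · -- primed letter c'
      by_cases hbc : b < c'
      · rw [if_pos hbc] at h
        obtain ⟨m, w', hch, hw, he⟩ := ih c' h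
        exact ⟨c' :: m, w', List.chain_cons.mpr ⟨hbc, hch⟩, by simp [hw], he⟩
      · rw [if_neg hbc] at h; simp at h
    · -- comma
      exact ⟨[], w, List.Chain.nil, by simp, h⟩

theorem runB_lastMid : ∀ (n : ℕ) (w : List (Ltr α)) (b : α), w.length ≤ n →
    run (.lastMid b) w = .stDone →
    ∃ m, List.Chain (· < ·) b m ∧
      w = m.flatMap (fun c => [(.inl (.inr (.inl c)) : Ltr α), .inr (.inr (.inl c))]) ++
        [.inr (.inr (.inr .rang)), .inl (.inr (.inr .rang))] := by
  intro n
  induction n with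
  | zero =>
    intro w b hlen h
    rw [List.length_eq_zero_iff.mp (Nat.le_zero.mp hlen)] at h
    simp at h
  | succ n ih =>
    intro w b hlen h
    cases w with
    | nil => simp at h
    | cons c w =>
      rcases c with (a | c' | (_|_|_|_)) | (a | c' | (_|_|_|_)) <;> simp [stepF] at h
      · -- left primed c'
        by_cases hbc : b < c'
        · rw [if_pos hbc] at h
          cases w with
          | nil => simp at h
          | cons d w =>
            rcases d with (a' | c'' | (_|_|_|_)) | (a' | c'' | (_|_|_|_)) <;> simp [stepF] at h
            by_cases hc : c'' = c'
            · subst hc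
              rw [if_pos rfl] at h
              obtain ⟨m, hch, hw⟩ := ih w c'' (by simp at hlen; omega) h
              exact ⟨c'' :: m, List.chain_cons.mpr ⟨hbc, hch⟩, by simp [hw]⟩
            · rw [if_neg hc] at h; simp at h
        · rw [if_neg hbc] at h; simp at h
      · -- right rang
        rw [runB_expectRang w h]
        exact ⟨[], List.Chain.nil, rfl⟩

theorem runB_lastSetStart (w : List (Ltr α)) (h : run .lastSetStart w = .stDone) :
    ∃ m, List.Chain' (· < ·) m ∧
      w = m.flatMap (fun c => [(.inl (.inr (.inl c)) : Ltr α), .inr (.inr (.inl c))]) ++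
        [.inr (.inr (.inr .rang)), .inl (.inr (.inr .rang))] := by
  cases w with
  | nil => simp at h
  | cons c w =>
    rcases c with (a | c' | (_|_|_|_)) | (a | c' | (_|_|_|_)) <;> simp [stepF] at h
    · -- left primed c' : lastHalf c'
      cases w with
      | nil => simp at h
      | cons d w =>
        rcases d with (a' | c'' | (_|_|_|_)) | (a' | c'' | (_|_|_|_)) <;> simp [stepF] at h
        by_cases hc : c'' = c'
        · subst hc
          rw [if_pos rfl] at h
          obtain ⟨m, hch, hw⟩ := runB_lastMid w.length w c'' le_rfl h
          exact ⟨c'' :: m, hch, by simp [hw]⟩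
        · rw [if_neg hc] at h; simp at h
    · -- right rang
      rw [runB_expectRang w h]
      exact ⟨[], List.isChain_nil, rfl⟩

theorem sort_toFinset_of_chain (b : α) (m : List α) (h : List.Chain (· < ·) b m) :
    (b :: m).toFinset.sort (· ≤ ·) = b :: m := by
  have hp : (b :: m).Pairwise (· < ·) := List.isChain_iff_pairwise.mp h
  have hnd : (b :: m).Nodup := hp.imp ne_of_lt
  exact (List.toFinset_sort (· ≤ ·) hnd).mpr (hp.imp le_of_lt)

theorem sort_toFinset_of_chain' (m : List α) (h : List.Chain' (· < ·) m) :
    m.toFinset.sort (· ≤ ·) = m := by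
  have hp : m.Pairwise (· < ·) := List.isChain_iff_pairwise.mp h
  have hnd : m.Nodup := hp.imp ne_of_lt
  exact (List.toFinset_sort (· ≤ ·) hnd).mpr (hp.imp le_of_lt)

theorem runB_annStart : ∀ (n : ℕ) (w : List (Ltr α)), w.length ≤ n →
    run .annStart w = .stDone → ∃ A l, w = body A l := by
  intro n
  induction n with
  | zero =>
    intro w hlen h
    rw [List.length_eq_zero_iff.mp (Nat.le_zero.mp hlen)] at h
    simp at h
  | succ n ih =>
    intro w hlen h
    cases w with
    | nil => simp at h
    | cons c w =>
      rcases c with (a | c' | (_|_|_|_)) | (a | c' | (_|_|_|_)) <;> simp [stepF] at h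
      · -- left primed c' : midNL c'
        obtain ⟨m, w', hch, hw, he⟩ := runB_mid w c' h
        obtain ⟨a, w'', hw', ha⟩ := runB_expectEvent w' he
        have hlen' : w''.length ≤ n := by
          subst hw hw'
          simp at hlen
          omega
        obtain ⟨A, l, hbody⟩ := ih w'' hlen' ha
        refine ⟨some (c' :: m).toFinset, (a, A) :: l, ?_⟩
        rw [body, segNL]
        rw [sort_toFinset_of_chain c' m hch]
        simp [hw, hw', hbody]
      · -- comma : expectEvent  (empty non-last set)
        obtain ⟨a, w'', hw', ha⟩ := runB_expectEvent w h
        have hlen' : w''.length ≤ n := by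
          subst hw'
          simp at hlen
          omega
        obtain ⟨A, l, hbody⟩ := ih w'' hlen' ha
        refine ⟨some ∅, (a, A) :: l, ?_⟩
        rw [body, segNL]
        simp [hw', hbody]
      · -- bullet : afterBullet
        cases w with
        | nil => simp at h
        | cons d w =>
          rcases d with (a' | c'' | (_|_|_|_)) | (a' | c'' | (_|_|_|_)) <;> simp [stepF] at h
          · -- rang : done
            rw [run_done w h]
            exact ⟨none, [], rfl⟩
          · -- comma : expectEvent
            obtain ⟨a, w'', hw', ha⟩ := runB_expectEvent w h
            have hlen' : w''.length ≤ n := by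
              subst hw'
              simp at hlen
              omega
            obtain ⟨A, l, hbody⟩ := ih w'' hlen' ha
            exact ⟨none, (a, A) :: l, by simp [body, segNL, hw', hbody]⟩
      · -- right lang : lastSetStart
        obtain ⟨m, hch, hw⟩ := runB_lastSetStart w h
        refine ⟨some m.toFinset, [], ?_⟩
        rw [body, segL]
        rw [sort_toFinset_of_chain' m hch]
        simp [hw]

theorem run_init_iff (w : List (Ltr α)) :
    run .init w = .stDone ↔ ∃ x : FLObs α, w = canon x := by
  constructor
  · intro h
    cases w with
    | nil => simp at h
    | cons c w =>
      rcases c with (a | c' | (_|_|_|_)) | (a | c' | (_|_|_|_)) <;> simp [stepF] at h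
      obtain ⟨A, l, hw⟩ := runB_annStart w.length w le_rfl h
      exact ⟨(A, l), by simp [canon, hw]⟩
  · rintro ⟨x, rfl⟩
    exact runF_canon x

/-! ### Packaging the automaton -/

variable [Fintype α]

noncomputable def Mfin : DFA (Ltr α) (Fin (Fintype.card (St α))) :=
  ⟨fun q c => (Fintype.equivFin (St α)) (stepF ((Fintype.equivFin (St α)).symm q) c),
    (Fintype.equivFin (St α)) .init, {(Fintype.equivFin (St α)) .stDone}⟩

theorem Mfin_evalFrom (w : List (Ltr α)) : ∀ (q : St α),
    (Mfin (α := α)).evalFrom ((Fintype.equivFin (St α)) q) w =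
      (Fintype.equivFin (St α)) (run q w) := by
  induction w with
  | nil => intro q; rfl
  | cons c w ih =>
    intro q
    show (Mfin (α := α)).evalFrom ((Mfin (α := α)).step _ c) w = _
    rw [show (Mfin (α := α)).step ((Fintype.equivFin (St α)) q) c =
      (Fintype.equivFin (St α)) (stepF q c) by simp [Mfin]]
    exact ih (stepF q c)

theorem Mfin_accepts (w : List (Ltr α)) :
    w ∈ (Mfin (α := α)).accepts ↔ ∃ x : FLObs α, w = canon x := by
  rw [DFA.mem_accepts]
  show (Mfin (α := α)).evalFrom ((Fintype.equivFin (St α)) .init) w ∈ _ ↔ _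
  rw [Mfin_evalFrom]
  rw [← run_init_iff]
  constructor
  · intro h
    exact (Fintype.equivFin (St α)).injective h
  · intro h
    rw [h]; rfl

end CanonA

/-! ### Part (b) preliminaries -/

section PartB

theorem takeWhile_append_all {β : Type} (p : β → Bool) (l r : List β)
    (hl : ∀ x ∈ l, p x) (hr : match r with | [] => True | c :: _ => ¬ p c) :
    (l ++ r).takeWhile p = l := by
  induction l with
  | nil =>
    cases r with
    | nil => rfl
    | cons c r => simp_all [List.takeWhile_cons]
  | cons a l ih =>
    simp only [List.cons_append, List.takeWhile_cons, hl a (by simp)]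
    simp [ih (fun x hx => hl x (by simp [hx]))]

theorem dropWhile_append_all {β : Type} (p : β → Bool) (l r : List β)
    (hl : ∀ x ∈ l, p x) (hr : match r with | [] => True | c :: _ => ¬ p c) :
    (l ++ r).dropWhile p = r := by
  induction l with
  | nil =>
    cases r with
    | nil => rfl
    | cons c r => simp_all [List.dropWhile_cons]
  | cons a l ih =>
    simp only [List.cons_append, List.dropWhile_cons, hl a (by simp)]
    simp [ih (fun x hx => hl x (by simp [hx]))]

variable {α : Type} [LinearOrder α]

/-- The tail of `psiA`. -/
def psiTail (A : Option (Finset α)) : List (ThetaA α) :=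
  match A with
  | none => []
  | some B => [Sum.inr (Sum.inr MSym.lang)] ++
      (B.sort (· ≤ ·)).map (fun a => Sum.inr (Sum.inl a)) ++ [Sum.inr (Sum.inr MSym.rang)]

theorem psiA_eq (y : List α × Option (Finset α)) :
    psiA y = y.1.map Sum.inl ++ psiTail y.2 := by
  obtain ⟨s, A⟩ := y
  cases A <;> rfl

theorem countP_psiTail (A : Option (Finset α)) :
    (psiTail A).countP Sum.isLeft = 0 := by
  cases A <;> simp [psiTail, List.countP_cons, List.countP_append, List.countP_map,
    List.countP_eq_zero]

theorem psi_prefix (y₁ y₂ : List α × Option (Finset α)) (h : psiA y₁ <+: psiA y₂) :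
    (y₁.2 = none ∧ y₁.1 <+: y₂.1) ∨ y₁ = y₂ := by
  obtain ⟨s₁, A₁⟩ := y₁
  obtain ⟨s₂, A₂⟩ := y₂
  obtain ⟨r, hr⟩ := h
  rw [psiA_eq, psiA_eq] at hr
  simp only at hr
  cases A₁ with
  | none =>
    left
    refine ⟨rfl, ?_⟩
    rw [show psiTail (none : Option (Finset α)) = [] from rfl, List.append_nil] at hr
    -- length comparison via counting left letters
    have hlen : s₁.length ≤ s₂.length := by
      have := congrArg (List.countP Sum.isLeft) hr
      simp only [List.countP_append, List.countP_map, countP_psiTail] at this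
      have h1 : List.countP (Sum.isLeft ∘ (Sum.inl : α → ThetaA α)) s₁ = s₁.length := by
        simp [List.countP_eq_length]
      have h2 : List.countP (Sum.isLeft ∘ (Sum.inl : α → ThetaA α)) s₂ = s₂.length := by
        simp [List.countP_eq_length]
      omega
    -- taking the first |s₁| letters
    have htake := congrArg (List.take s₁.length) hr
    rw [List.take_append_of_le_length (by simp), List.take_append_of_le_length (by simpa),
      ← List.map_take, ← List.map_take, List.take_length] at htake
    have hs : s₁ = s₂.take s₁.length :=
      List.map_injective_iff.mpr Sum.inl_injective htake
    rw [hs]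
    exact List.take_prefix _ _
  | some B₁ =>
    right
    -- both strings start with the same left part
    simp only [psiTail] at hr
    rw [List.append_assoc] at hr
    have htw := congrArg (List.takeWhile Sum.isLeft) hr
    rw [takeWhile_append_all _ _ _ (by simp)
        (by simp), takeWhile_append_all _ _ _ (by simp)
        (by cases A₂ <;> simp [psiTail])] at htw
    have hs : s₁ = s₂ := List.map_injective_iff.mpr Sum.inl_injective htw
    subst hs
    have hT : ([Sum.inr (Sum.inr MSym.lang)] ++
        (B₁.sort (· ≤ ·)).map (fun a => (Sum.inr (Sum.inl a) : ThetaA α)) ++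
        [Sum.inr (Sum.inr MSym.rang)]) ++ r = psiTail A₂ :=
      List.append_cancel_left hr
    cases A₂ with
    | none => simp [psiTail] at hT
    | some B₂ =>
      simp only [psiTail, List.append_assoc, List.cons_append, List.nil_append,
        List.cons.injEq, true_and] at hT
      -- hT : sort B₁ mapped ++ ([rang] ++ r) = sort B₂ mapped ++ [rang]
      have htw2 := congrArg (List.takeWhile
        (fun c => decide (c ≠ (Sum.inr (Sum.inr MSym.rang) : ThetaA α)))) hT
      rw [takeWhile_append_all _ _ _ (by simp) (by simp),
        takeWhile_append_all _ _ _ (by simp) (by simp)] at htw2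
      have hinj : Function.Injective (fun a => (Sum.inr (Sum.inl a) : ThetaA α)) := by
        intro x y hxy
        simpa using hxy
      have hsort : B₁.sort (· ≤ ·) = B₂.sort (· ≤ ·) :=
        List.map_injective_iff.mpr hinj htw2
      have : B₁ = B₂ := by
        ext a
        rw [← Finset.mem_sort (α := α) (· ≤ ·), ← Finset.mem_sort (α := α) (· ≤ ·), hsort]
      rw [this]

theorem extLE_refl (u : FLObs α) : extLE u u :=
  ⟨Or.inl rfl, le_rfl, fun _ _ _ => ⟨rfl, Or.inl rfl⟩⟩

theorem partB (y₁ y₂ : List α × Option (Finset α)) (h : psiA y₁ <+: psiA y₂) :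
    inducedRel extLE accRel y₁ y₂ := by
  intro b hb
  rcases psi_prefix y₁ y₂ h with ⟨h1, hpre⟩ | rfl
  · obtain ⟨hb1, hb2⟩ := hb
    set k := y₁.1.length with hk
    have hkle : k ≤ b.2.length := by
      have := hpre.length_le
      rw [hb1] at this
      simpa using this
    refine ⟨(none, (b.2.take k).map (fun p => (p.1, none))), ⟨?_, ?_⟩, ?_, ?_, ?_⟩
    · -- events agree
      rw [List.map_map]
      have : (Prod.fst ∘ fun p : α × Option (Finset α) => (p.1, (none : Option (Finset α))))
          = Prod.fst := rfl
      rw [this, List.map_take, ← hb1]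
      exact (List.prefix_iff_eq_take.mp hpre)
    · -- last annotation is none
      rw [h1]
      unfold lastAnn
      cases hq : ((b.2.take k).map (fun p => (p.1, (none : Option (Finset α))))).getLast? with
      | none => rfl
      | some q =>
        have hmem := List.mem_of_mem_getLast? hq
        obtain ⟨p, _, rfl⟩ := List.mem_map.mp hmem
        rfl
    · exact Or.inr rfl
    · simpa using hkle
    · intro i hi hj
      simp only [List.get_eq_getElem, List.getElem_map, List.getElem_take]
      exact ⟨by trivial, Or.inr rfl⟩
  · exact ⟨b, hb, extLE_refl b⟩

end PartB

/-- The acceptances (ready sets) model `A` is rational: (a) there is an NFA with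
finitely many states over `Ξ ⊕ Θ` recognising `{(φ x, ψ y) : (x, y) ∈ acc_Σ}`, and
(b) `ψ` is order-reflecting: whenever `ψ y₁` is a prefix of `ψ y₂` then `y₁ ≼ y₂` in
the relation induced by `acc_Σ` from the extension order on `FL_Σ`. -/
theorem stmt10 {α : Type} [Fintype α] [Nonempty α] [LinearOrder α] :
    (∃ (n : ℕ) (A : NFA (Xi α ⊕ ThetaA α) (Fin n)),
      Recognises A (fun s t => ∃ (x : FLObs α) (y : List α × Option (Finset α)),
        s = phi x ∧ t = psiA y ∧ accRel x y)) ∧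
    (∀ y₁ y₂ : List α × Option (Finset α),
      psiA y₁ <+: psiA y₂ → inducedRel extLE accRel y₁ y₂) := by
  constructor
  · refine ⟨Fintype.card (CanonA.St α), (CanonA.Mfin (α := α)).toNFA, ?_⟩
    intro s t
    constructor
    · rintro ⟨x, y, rfl, rfl, hacc⟩
      obtain ⟨y1, y2⟩ := y
      obtain ⟨h1, h2⟩ := hacc
      simp only at h1 h2
      subst h1 h2
      refine ⟨CanonA.canon x, ?_, CanonA.canon_left x, CanonA.canon_right x⟩
      rw [DFA.toNFA_correct]
      exact (CanonA.Mfin_accepts _).mpr ⟨x, rfl⟩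
    · rintro ⟨w, hw, rfl, rfl⟩
      rw [DFA.toNFA_correct] at hw
      obtain ⟨x, rfl⟩ := (CanonA.Mfin_accepts _).mp hw
      exact ⟨x, (x.2.map Prod.fst, lastAnn x), CanonA.canon_left x,
        CanonA.canon_right x, rfl, rfl⟩
  · exact fun y₁ y₂ h => partB y₁ y₂ h
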